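/- arXiv:1906.06398 — 4 statements merged into one kernel-verified Lean document; each statement's English description precedes it below -/
import Mathlib

section
/- Let S be a Noetherian ring, g_1, …, g_c a regular sequence in S, R = S/(g_1,…,g_c), and let the Koszul complex E = ⋀• S^c on g_1,…,g_c be the S-free resolution of R. Let (K, δ) be an S-free resolution of an R-module M and, for each j, let τ_j: K → K[1] be a homotopy for multiplication by g_j on K. Define σ_{s,j}: ⋀^s S^c ⊗ K_j → K_{s+j} by sending e_{i_1}∧⋯∧e_{i_s} ⊗ a (with i_1 < ⋯ < i_s) to τ_{i_1}∘⋯∘τ_{i_s}(a). Then σ is a map of complexes E ⊗ K → K extending the multiplication map R ⊗ M → M; i.e., δσ_{s,j}(ω ⊗ a) = σ_{s−1,j}(∂ω ⊗ a) + (−1)^s σ_{s,j−1}(ω ⊗ δa), where ∂ is the Koszul differential of E. -/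
/-!
STATEMENT 4: `S` Noetherian, `g 1, …, g c` a regular sequence, `R = S/(g)`, `E` the
Koszul complex on the `g j`, `(K, d)` an `S`-free resolution of an `R`-module `M`,
and `τ j` homotopies for multiplication by `g j` on `K`.  The maps
`σ_{s,j}(e_{i₁} ∧ ⋯ ∧ e_{iₛ} ⊗ a) = (τ_{i₁} ∘ ⋯ ∘ τ_{iₛ})(a)` (for `i₁ < ⋯ < iₛ`)
form a map of complexes `E ⊗ K → K` extending `R ⊗ M → M`; on basis elements this
is the identity
`d(τ_{i₁}⋯τ_{iₛ} a) = ∑ₜ (−1)ᵗ g_{iₜ}·(τ_{i₁}⋯τ̂_{iₜ}⋯τ_{iₛ} a) + (−1)ˢ τ_{i₁}⋯τ_{iₛ}(d a)`.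
-/

/-- composition, along ascending homological degrees, of a list of degree `+1` maps -/
def compUp {S : Type*} [CommRing S] {K : ℕ → Type*}
    [∀ i, AddCommGroup (K i)] [∀ i, Module S (K i)] {c : ℕ}
    (τ : Fin c → ∀ i : ℕ, K i →ₗ[S] K (i + 1)) :
    (l : List (Fin c)) → ∀ i : ℕ, K i →ₗ[S] K (i + l.length)
  | [], _ => LinearMap.id
  | a :: l, i => (τ a (i + l.length)) ∘ₗ (compUp τ l i)

/-- transport along an equality of indices -/
def castK {S : Type*} [CommRing S] {K : ℕ → Type*}
    [∀ i, AddCommGroup (K i)] [∀ i, Module S (K i)] {a b : ℕ} (h : a = b) :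
    K a →ₗ[S] K b := by subst h; exact LinearMap.id

section helpers
variable {S : Type*} [CommRing S] {K : ℕ → Type*}
    [∀ i, AddCommGroup (K i)] [∀ i, Module S (K i)] {c : ℕ}

lemma castK_id {a : ℕ} (h : a = a) : (castK h : K a →ₗ[S] K a) = LinearMap.id := rfl

lemma castK_irrel {a b : ℕ} (h h' : a = b) : (castK h : K a →ₗ[S] K b) = castK h' := rfl

lemma comp_castK {a b p : ℕ} (h : a = b) (f : ∀ i, K i →ₗ[S] K (i + p))
    (h' : a + p = b + p) :
    f b ∘ₗ (castK h : K a →ₗ[S] K b) = (castK h' : K (a + p) →ₗ[S] K (b + p)) ∘ₗ f a := by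
  subst h; rfl

lemma d_comp_castK {a b : ℕ} (d : ∀ i : ℕ, K (i + 1) →ₗ[S] K i) (h : a = b)
    (h' : a + 1 = b + 1) :
    d b ∘ₗ (castK h' : K (a + 1) →ₗ[S] K (b + 1)) = (castK h : K a →ₗ[S] K b) ∘ₗ d a := by
  subst h; rfl

lemma tau_castK {c : ℕ} (τ : Fin c → ∀ i : ℕ, K i →ₗ[S] K (i + 1)) (a : Fin c)
    {p q : ℕ} (h : p = q) :
    τ a q ∘ₗ (castK h : K p →ₗ[S] K q)
      = (castK (by rw [h]) : K (p + 1) →ₗ[S] K (q + 1)) ∘ₗ τ a p := by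
  subst h; rfl

lemma comp_zsmul {a b e : ℕ} (f : K b →ₗ[S] K e) (z : ℤ) (h : K a →ₗ[S] K b) :
    f ∘ₗ (z • h) = z • (f ∘ₗ h) := by
  ext x; simp

lemma comp_ssmul {a b e : ℕ} (f : K b →ₗ[S] K e) (s : S) (h : K a →ₗ[S] K b) :
    f ∘ₗ (s • h) = s • (f ∘ₗ h) := by
  ext x; simp

lemma comp_sum {a b e : ℕ} (f : K b →ₗ[S] K e) {ι : Type*} (s : Finset ι)
    (h : ι → (K a →ₗ[S] K b)) :
    f ∘ₗ (∑ t ∈ s, h t) = ∑ t ∈ s, (f ∘ₗ h t) := by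
  ext x; simp

end helpers

section main
variable {S : Type*} [CommRing S] {K : ℕ → Type*}
    [∀ i, AddCommGroup (K i)] [∀ i, Module S (K i)] {c : ℕ}

lemma key_pos (g : Fin c → S) (d : ∀ i : ℕ, K (i + 1) →ₗ[S] K i)
    (τ : Fin c → ∀ i : ℕ, K i →ₗ[S] K (i + 1))
    (hτ : ∀ j i, (d (i + 1)) ∘ₗ (τ j (i + 1)) + (τ j i) ∘ₗ (d i) = g j • LinearMap.id) :
    ∀ (l : List (Fin c)) (a : Fin c) (i : ℕ),
      (d ((i + 1) + l.length)) ∘ₗ (compUp τ (a :: l) (i + 1))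
        = (∑ t : Fin (a :: l).length,
            ((-1 : ℤ) ^ (t : ℕ)) •
              (g ((a :: l).get t) •
                ((castK (by rw [List.length_eraseIdx_of_lt t.isLt, List.length_cons, Nat.add_sub_cancel]) :
                    K ((i + 1) + ((a :: l).eraseIdx (t : ℕ)).length)
                      →ₗ[S] K ((i + 1) + l.length)) ∘ₗ
                  (compUp τ ((a :: l).eraseIdx (t : ℕ)) (i + 1)))))
          + ((-1 : ℤ) ^ (a :: l).length) •
              ((castK (by rw [List.length_cons, Nat.add_comm l.length 1, Nat.add_assoc]) : K (i + (a :: l).length) →ₗ[S] K ((i + 1) + l.length)) ∘ₗ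
                ((compUp τ (a :: l) i) ∘ₗ (d i))) := by
  intro l
  induction l with
  | nil =>
    intro a i
    have h' : d (i + 1) ∘ₗ τ a (i + 1) = g a • LinearMap.id - τ a i ∘ₗ d i :=
      eq_sub_of_add_eq (hτ a i)
    simp only [List.length_nil, List.length_cons, Fin.sum_univ_one, pow_zero, one_smul,
      pow_one, List.eraseIdx, List.get, castK_id, LinearMap.id_comp, compUp,
      Fin.sum_univ_succ, Fin.sum_univ_zero, LinearMap.comp_id, add_zero, Fin.val_zero,
      zero_add, neg_smul, h', sub_eq_add_neg]
    norm_num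
    rfl
  | cons b m ih =>
    intro a i
    have hd : d ((i+1) + (m.length + 1)) ∘ₗ τ a ((i+1) + (m.length + 1))
        = g a • LinearMap.id - τ a ((i+1)+m.length) ∘ₗ d ((i+1)+m.length) :=
      eq_sub_of_add_eq (hτ a ((i+1)+m.length))
    simp only [List.length_cons]
    rw [show compUp τ (a::b::m) (i+1)
        = τ a ((i+1) + (m.length + 1)) ∘ₗ compUp τ (b::m) (i+1) from rfl,
      ← LinearMap.comp_assoc, hd, LinearMap.sub_comp, LinearMap.smul_comp,
      LinearMap.id_comp, LinearMap.comp_assoc, ih b i]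
    simp only [LinearMap.comp_add, comp_sum, comp_zsmul, comp_ssmul]
    simp only [← LinearMap.comp_assoc]
    simp only [tau_castK τ]
    simp only [LinearMap.comp_assoc]
    rw [Fin.sum_univ_succ]
    simp only [Fin.val_zero, pow_zero, one_smul, Fin.val_succ, pow_succ, List.get_eq_getElem,
      List.getElem_cons_succ, List.getElem_cons_zero, List.eraseIdx, List.length_cons,
      castK_id, LinearMap.id_comp, compUp, mul_smul, neg_smul, smul_neg, neg_neg,
      sub_eq_add_neg, neg_add, Finset.sum_neg_distrib, LinearMap.comp_assoc]
    exact (add_assoc _ _ _).symm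

lemma key_zero (g : Fin c → S) (d : ∀ i : ℕ, K (i + 1) →ₗ[S] K i)
    (τ : Fin c → ∀ i : ℕ, K i →ₗ[S] K (i + 1))
    (hτ : ∀ j i, (d (i + 1)) ∘ₗ (τ j (i + 1)) + (τ j i) ∘ₗ (d i) = g j • LinearMap.id)
    (hτ0 : ∀ j, (d 0) ∘ₗ (τ j 0) = g j • LinearMap.id) :
    ∀ (l : List (Fin c)) (a : Fin c),
      (d (0 + l.length)) ∘ₗ (compUp τ (a :: l) 0)
        = ∑ t : Fin (a :: l).length,
            ((-1 : ℤ) ^ (t : ℕ)) •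
              (g ((a :: l).get t) •
                ((castK (by rw [List.length_eraseIdx_of_lt t.isLt, List.length_cons, Nat.add_sub_cancel]) :
                    K (0 + ((a :: l).eraseIdx (t : ℕ)).length)
                      →ₗ[S] K (0 + l.length)) ∘ₗ
                  (compUp τ ((a :: l).eraseIdx (t : ℕ)) 0))) := by
  intro l
  induction l with
  | nil =>
    intro a
    have h' : d 0 ∘ₗ τ a 0 = g a • LinearMap.id := hτ0 a
    simp only [List.length_nil, List.length_cons, Fin.sum_univ_one, pow_zero, one_smul,
      pow_one, List.eraseIdx, List.get, castK_id, LinearMap.id_comp, compUp,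
      Fin.sum_univ_succ, Fin.sum_univ_zero, LinearMap.comp_id, add_zero, Fin.val_zero,
      zero_add, neg_smul, h', sub_eq_add_neg]
    rfl
  | cons b m ih =>
    intro a
    have hd : d (0 + (m.length + 1)) ∘ₗ τ a (0 + (m.length + 1))
        = g a • LinearMap.id - τ a (0 + m.length) ∘ₗ d (0 + m.length) :=
      eq_sub_of_add_eq (hτ a (0 + m.length))
    simp only [List.length_cons]
    rw [show compUp τ (a::b::m) 0
        = τ a (0 + (m.length + 1)) ∘ₗ compUp τ (b::m) 0 from rfl,
      ← LinearMap.comp_assoc, hd, LinearMap.sub_comp, LinearMap.smul_comp,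
      LinearMap.id_comp, LinearMap.comp_assoc, ih b]
    simp only [LinearMap.comp_add, comp_sum, comp_zsmul, comp_ssmul]
    simp only [← LinearMap.comp_assoc]
    simp only [tau_castK τ]
    simp only [LinearMap.comp_assoc]
    rw [Fin.sum_univ_succ]
    simp only [Fin.val_zero, pow_zero, one_smul, Fin.val_succ, pow_succ, List.get_eq_getElem,
      List.getElem_cons_succ, List.getElem_cons_zero, List.eraseIdx, List.length_cons,
      castK_id, LinearMap.id_comp, compUp, mul_smul, neg_smul, smul_neg, neg_neg,
      sub_eq_add_neg, neg_add, Finset.sum_neg_distrib, LinearMap.comp_assoc]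
    rfl
end main


theorem sigma_maps_form_chain_map
    (S : Type*) [CommRing S] [IsNoetherianRing S]
    (c : ℕ) (g : Fin c → S)
    (hreg : RingTheory.Sequence.IsRegular S (List.ofFn g))
    -- an `S`-free resolution `K` of the `R = S/(g)`-module `M`
    (M : Type*) [AddCommGroup M] [Module S M]
    (hM : ∀ j, ∀ m : M, g j • m = 0)
    (K : ℕ → Type*) [∀ i, AddCommGroup (K i)] [∀ i, Module S (K i)]
    [∀ i, Module.Free S (K i)] [∀ i, Module.Finite S (K i)]
    (d : ∀ i : ℕ, K (i + 1) →ₗ[S] K i)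
    (ε : K 0 →ₗ[S] M) (hsurj : Function.Surjective ε)
    (h0 : LinearMap.ker ε = LinearMap.range (d 0))
    (hexact : ∀ i, LinearMap.ker (d i) = LinearMap.range (d (i + 1)))
    -- the homotopies `τ j` for multiplication by `g j` on `K`
    (τ : Fin c → ∀ i : ℕ, K i →ₗ[S] K (i + 1))
    (hτ : ∀ j i, (d (i + 1)) ∘ₗ (τ j (i + 1)) + (τ j i) ∘ₗ (d i)
            = g j • LinearMap.id)
    (hτ0 : ∀ j, (d 0) ∘ₗ (τ j 0) = g j • LinearMap.id) :
    -- the chain-map identity for `σ`, on a basis element indexed by the strictly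
    -- increasing list `a :: l` (evaluated on `K (i+1)`; the analogous identity on
    -- `K 0` omits the last term)
    (∀ (a : Fin c) (l : List (Fin c)), (a :: l).Chain' (· < ·) → ∀ i : ℕ,
      (d ((i + 1) + l.length)) ∘ₗ (compUp τ (a :: l) (i + 1))
        = (∑ t : Fin (a :: l).length,
            ((-1 : ℤ) ^ (t : ℕ)) •
              (g ((a :: l).get t) •
                ((castK (by rw [List.length_eraseIdx_of_lt t.isLt, List.length_cons]; omega) :
                    K ((i + 1) + ((a :: l).eraseIdx (t : ℕ)).length)
                      →ₗ[S] K ((i + 1) + l.length)) ∘ₗ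
                  (compUp τ ((a :: l).eraseIdx (t : ℕ)) (i + 1)))))
          + ((-1 : ℤ) ^ (a :: l).length) •
              ((castK (by simp [List.length_cons]; omega) : K (i + (a :: l).length) →ₗ[S] K ((i + 1) + l.length)) ∘ₗ
                ((compUp τ (a :: l) i) ∘ₗ (d i)))) ∧
    (∀ (a : Fin c) (l : List (Fin c)), (a :: l).Chain' (· < ·) →
      (d (0 + l.length)) ∘ₗ (compUp τ (a :: l) 0)
        = ∑ t : Fin (a :: l).length,
            ((-1 : ℤ) ^ (t : ℕ)) •
              (g ((a :: l).get t) •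
                ((castK (by rw [List.length_eraseIdx_of_lt t.isLt, List.length_cons]; omega) :
                    K (0 + ((a :: l).eraseIdx (t : ℕ)).length)
                      →ₗ[S] K (0 + l.length)) ∘ₗ
                  (compUp τ ((a :: l).eraseIdx (t : ℕ)) 0)))) := by
  exact ⟨fun a l _ i => key_pos g d τ hτ l a i, fun a l _ => key_zero g d τ hτ hτ0 l a⟩
end

section
/- Let K be the Koszul complex over S on a regular sequence f_1, …, f_n, and let g_1, …, g_c be a regular sequence with g_j = Σ_i a_{ij} f_i for a c×n matrix A = (a_{ij}). Then the composition τ_1∘⋯∘τ_c of the homotopies τ_j = (Σ_i a_{ij} e_i) ∧ − for the g_j on K equals exterior multiplication by the element α = ⋀^c A(e̅_1∧⋯∧e̅_c) ∈ ⋀^c S^n, where e̅_1,…,e̅_c is the standard basis of S^c; i.e., the degree-c map σ: K → K[−c] may be taken to be α ∧ −. -/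
/-!
STATEMENT 5: Let `K` be the Koszul complex on the regular sequence `f 1, …, f n`
(realized inside the exterior algebra `⋀ S^n`), and let `g 1, …, g c` be a regular
sequence with `g j = ∑ i, A i j * f i`.  The homotopy for `g j` is exterior
multiplication by the `j`-th column `∑ i, A i j • e i` of `A`.  The composition
`τ 1 ∘ ⋯ ∘ τ c` of these homotopies equals exterior multiplication by
`α = (⋀^c A)(e̅ 1 ∧ ⋯ ∧ e̅ c) ∈ ⋀^c S^n`.
-/

open ExteriorAlgebra

theorem composition_of_homotopies_is_wedge_by_alpha
    (S : Type*) [CommRing S] (n c : ℕ) (f : Fin n → S) (g : Fin c → S)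
    (hf : RingTheory.Sequence.IsRegular S (List.ofFn f))
    (hg : RingTheory.Sequence.IsRegular S (List.ofFn g))
    (A : Matrix (Fin n) (Fin c) S)
    (hA : ∀ j, g j = ∑ i, A i j * f i)
    -- the linear map `S^c → S^n` given by the matrix `A`
    (Alin : (Fin c → S) →ₗ[S] (Fin n → S))
    (hAlin : ∀ (v : Fin c → S) (i : Fin n), Alin v i = ∑ j, A i j * v j)
    -- `α` is the image of `e̅ 1 ∧ ⋯ ∧ e̅ c` under `⋀ A`
    (α : ExteriorAlgebra S (Fin n → S))
    (hα : α = ExteriorAlgebra.map Alin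
      ((List.ofFn fun j : Fin c => ι S (Pi.single j (1 : S))).prod))
    (x : ExteriorAlgebra S (Fin n → S)) :
    -- composing the homotopies (wedge by the columns of `A`, in order) is wedge by `α`
    ((List.ofFn fun j : Fin c => ι S (fun i => A i j)).prod) * x = α * x := by
  have h : α = (List.ofFn fun j : Fin c => ι S (fun i => A i j)).prod := by
    rw [hα, map_list_prod, List.map_ofFn]
    apply congrArg List.prod
    apply congrArg List.ofFn
    funext j
    show ExteriorAlgebra.map Alin (ι S (Pi.single j 1)) = _
    rw [ExteriorAlgebra.map_apply_ι]
    congr 1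
    funext i
    simp [hAlin, Pi.single_apply, mul_ite]
  rw [h]
end

section
/- Let S be a Noetherian ring, R = S/I where R admits a finite S-free resolution E of length c with ∂_c ≅ ∂_1^*. Let M be an R-module with S-free resolution (K, δ), and let σ: E ⊗ K → K be a map of complexes inducing the multiplication R ⊗ M → M, with components σ_{i,j}: E_i ⊗ K_j → K_{i+j}. Then (identifying E_c ≅ S) the maps R ⊗ σ_{c,j}: R ⊗ K_j → R ⊗ K_{c+j} form a morphism of complexes R ⊗ K → (R ⊗ K)[−c], and this morphism induces an isomorphism M = H_0(R ⊗ K) → H_c(R ⊗ K) = Tor^S_c(R, M). -/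
/-- reduction of a linear map modulo `I` -/
def quotMap {S : Type*} [CommRing S] (I : Ideal S) {A B : Type*}
    [AddCommGroup A] [Module S A] [AddCommGroup B] [Module S B] (φ : A →ₗ[S] B) :
    (A ⧸ (I • (⊤ : Submodule S A))) →ₗ[S] (B ⧸ (I • (⊤ : Submodule S B))) :=
  Submodule.mapQ _ _ φ (by
    refine Submodule.smul_le.mpr fun r hr m _ => ?_
    simp only [Submodule.mem_comap, map_smul]
    exact Submodule.smul_mem_smul hr Submodule.mem_top)

open TensorProduct LinearMap

section Prelim

variable {S : Type*} [CommRing S] {I : Ideal S}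

lemma castK_rfl {S : Type*} [CommRing S] {K : ℕ → Type*}
    [∀ i, AddCommGroup (K i)] [∀ i, Module S (K i)] {a : ℕ} :
    (castK (S := S) (K := K) (rfl : a = a)) = LinearMap.id := rfl

lemma mem_smulTop_map {A B : Type*} [AddCommGroup A] [Module S A] [AddCommGroup B] [Module S B]
    (φ : A →ₗ[S] B) {x : A} (hx : x ∈ I • (⊤ : Submodule S A)) :
    φ x ∈ I • (⊤ : Submodule S B) := by
  refine Submodule.smul_induction_on hx (fun r hr n _ => ?_) (fun a b ha hb => ?_)
  · rw [map_smul]; exact Submodule.smul_mem_smul hr Submodule.mem_top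
  · rw [map_add]; exact Submodule.add_mem _ ha hb

lemma tmul_mem_smulTop {A B : Type*} [AddCommGroup A] [Module S A] [AddCommGroup B] [Module S B]
    {p : A} (hp : p ∈ I • (⊤ : Submodule S A)) (k : B) :
    p ⊗ₜ[S] k ∈ I • (⊤ : Submodule S (A ⊗[S] B)) := by
  refine Submodule.smul_induction_on hp (fun r hr n _ => ?_) (fun a b ha hb => ?_)
  · rw [← smul_tmul']; exact Submodule.smul_mem_smul hr Submodule.mem_top
  · rw [add_tmul]; exact Submodule.add_mem _ ha hb

lemma smulTop_tmul_zero {A M : Type*} [AddCommGroup A] [Module S A] [AddCommGroup M] [Module S M]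
    (hkill : ∀ x ∈ I, ∀ m : M, x • m = 0)
    {p : A} (hp : p ∈ I • (⊤ : Submodule S A)) (m : M) :
    (p ⊗ₜ[S] m : A ⊗[S] M) = 0 := by
  refine Submodule.smul_induction_on hp (fun r hr n _ => ?_) (fun a b ha hb => ?_)
  · rw [smul_tmul, hkill r hr m, tmul_zero]
  · rw [add_tmul, ha, hb, add_zero]

lemma quotMap_mk {A B : Type*} [AddCommGroup A] [Module S A] [AddCommGroup B] [Module S B]
    (φ : A →ₗ[S] B) (x : A) :
    quotMap I φ (Submodule.Quotient.mk x) = Submodule.Quotient.mk (φ x) :=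
  Submodule.mapQ_apply _ _ _ _

lemma mk_eq_zero_iff {A : Type*} [AddCommGroup A] [Module S A] {x : A} :
    (Submodule.Quotient.mk x : A ⧸ (I • (⊤ : Submodule S A))) = 0 ↔
      x ∈ I • (⊤ : Submodule S A) :=
  Submodule.Quotient.mk_eq_zero _

lemma mem_range_quotMap {A B : Type*} [AddCommGroup A] [Module S A] [AddCommGroup B] [Module S B]
    (ψ : A →ₗ[S] B) {w : B} :
    ((Submodule.Quotient.mk w : B ⧸ (I • (⊤ : Submodule S B))) ∈ range (quotMap I ψ)) ↔
      ∃ p ∈ I • (⊤ : Submodule S B), ∃ y, w = p + ψ y := by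
  constructor
  · rintro ⟨q, hq⟩
    obtain ⟨y, rfl⟩ := Submodule.Quotient.mk_surjective _ q
    rw [quotMap_mk] at hq
    have h2 : ψ y - w ∈ I • (⊤ : Submodule S B) := (Submodule.Quotient.eq _).mp hq
    exact ⟨w - ψ y, by simpa using Submodule.neg_mem _ h2, y, by abel⟩
  · rintro ⟨p, hp, y, rfl⟩
    refine ⟨Submodule.Quotient.mk y, ?_⟩
    rw [quotMap_mk]
    exact ((Submodule.Quotient.eq _).mpr (by simpa using hp)).symm

lemma hv_comm {A A' B B' : Type*} [AddCommGroup A] [Module S A] [AddCommGroup A'] [Module S A']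
    [AddCommGroup B] [Module S B] [AddCommGroup B'] [Module S B']
    (f : A →ₗ[S] A') (g : B →ₗ[S] B') (w : A ⊗[S] B) :
    f.rTensor B' (g.lTensor A w) = g.lTensor A' (f.rTensor B w) := by
  rw [← LinearMap.comp_apply, rTensor_comp_lTensor, ← lTensor_comp_rTensor,
    LinearMap.comp_apply]

lemma lTensor_comp_apply' {A B B' B'' : Type*} [AddCommGroup A] [Module S A]
    [AddCommGroup B] [Module S B] [AddCommGroup B'] [Module S B'] [AddCommGroup B''] [Module S B'']
    (f : B' →ₗ[S] B'') (g : B →ₗ[S] B') (w : A ⊗[S] B) :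
    f.lTensor A (g.lTensor A w) = (f ∘ₗ g).lTensor A w := by
  rw [lTensor_comp, LinearMap.comp_apply]

lemma rTensor_comp_apply' {B A A' A'' : Type*} [AddCommGroup B] [Module S B]
    [AddCommGroup A] [Module S A] [AddCommGroup A'] [Module S A'] [AddCommGroup A''] [Module S A'']
    (f : A' →ₗ[S] A'') (g : A →ₗ[S] A') (w : A ⊗[S] B) :
    f.rTensor B (g.rTensor B w) = (f ∘ₗ g).rTensor B w := by
  rw [rTensor_comp, LinearMap.comp_apply]

end Prelim

section ESec

variable {S : Type*} [CommRing S] {I : Ideal S}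
variable {c : ℕ} {E : ℕ → Type*} [∀ i, AddCommGroup (E i)] [∀ i, Module S (E i)]

/-- contraction `E n ⊗ A ≃ A` along a trivialization `e : E n ≃ S`. -/
noncomputable def oneT {n : ℕ} (e : E n ≃ₗ[S] S) (A : Type*) [AddCommGroup A] [Module S A] :
    (E n ⊗[S] A) ≃ₗ[S] A :=
  (TensorProduct.congr e (LinearEquiv.refl S A)).trans (TensorProduct.lid S A)

@[simp] lemma oneT_tmul {n : ℕ} (e : E n ≃ₗ[S] S) {A : Type*} [AddCommGroup A] [Module S A]
    (y : E n) (x : A) : oneT e A (y ⊗ₜ x) = e y • x := by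
  simp [oneT]

lemma oneT_natural {n : ℕ} (e : E n ≃ₗ[S] S) {A B : Type*} [AddCommGroup A] [Module S A]
    [AddCommGroup B] [Module S B] (φ : A →ₗ[S] B) (w : E n ⊗[S] A) :
    oneT e B (φ.lTensor (E n) w) = φ (oneT e A w) := by
  induction w using TensorProduct.induction_on with
  | zero => simp
  | tmul y x => simp
  | add a b ha hb => simp [ha, hb]

variable (dE : ∀ i : ℕ, E (i + 1) →ₗ[S] E i) (e₀ : E 0 ≃ₗ[S] S)

lemma ismul_exists (haug : range (e₀.toLinearMap ∘ₗ dE 0) = I)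
    {A : Type*} [AddCommGroup A] [Module S A] {w : A} (hw : w ∈ I • (⊤ : Submodule S A)) :
    ∃ g : E 1 ⊗[S] A, oneT e₀ A ((dE 0).rTensor A g) = w := by
  refine Submodule.smul_induction_on hw (fun r hr n _ => ?_) ?_
  · rw [← haug] at hr
    obtain ⟨v, hv⟩ := hr
    exact ⟨v ⊗ₜ n, by simp [← hv]⟩
  · rintro x y ⟨g, hg⟩ ⟨g', hg'⟩
    exact ⟨g + g', by rw [map_add, map_add, hg, hg']⟩

lemma ismul_mem (haug : range (e₀.toLinearMap ∘ₗ dE 0) = I)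
    {A : Type*} [AddCommGroup A] [Module S A] (g : E 1 ⊗[S] A) :
    oneT e₀ A ((dE 0).rTensor A g) ∈ I • (⊤ : Submodule S A) := by
  induction g using TensorProduct.induction_on with
  | zero => simp
  | tmul y x =>
      simp only [rTensor_tmul, oneT_tmul]
      refine Submodule.smul_mem_smul ?_ Submodule.mem_top
      rw [← haug]; exact ⟨y, rfl⟩
  | add a b ha hb => rw [map_add, map_add]; exact Submodule.add_mem _ ha hb

/-- the crucial smallness: `dE c` has image inside `I • E c`. -/
lemma dEc_small [Module.Free S (E 1)] [Module.Finite S (E 1)]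
    (a : E (c + 1) ≃ₗ[S] Module.Dual S (E 0)) (b : E c ≃ₗ[S] Module.Dual S (E 1))
    (hdual : ∀ z : E (c + 1), b (dE c z) = (dE 0).dualMap (a z))
    (haug : range (e₀.toLinearMap ∘ₗ dE 0) = I) (z : E (c + 1)) :
    dE c z ∈ I • (⊤ : Submodule S (E c)) := by
  have hf : ∀ v : E 1, ((dE 0).dualMap (a z)) v ∈ I := by
    intro v
    have h1 : dE 0 v = e₀ (dE 0 v) • e₀.symm 1 := by
      rw [← map_smul, smul_eq_mul, mul_one, LinearEquiv.symm_apply_apply]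
    have h2 : ((dE 0).dualMap (a z)) v = e₀ (dE 0 v) * (a z) (e₀.symm 1) := by
      rw [dualMap_apply]
      conv_lhs => rw [h1]
      rw [map_smul, smul_eq_mul]
    rw [h2]
    refine Ideal.mul_mem_right _ _ ?_
    rw [← haug]; exact ⟨v, rfl⟩
  have hb : b (dE c z) ∈ I • (⊤ : Submodule S (Module.Dual S (E 1))) := by
    rw [hdual z]
    set f := (dE 0).dualMap (a z) with hfdef
    let bs := Module.Free.chooseBasis S (E 1)
    rw [← bs.sum_dual_apply_smul_coord f]
    refine Submodule.sum_mem _ fun i _ => ?_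
    exact Submodule.smul_mem_smul (hf _) Submodule.mem_top
  have := mem_smulTop_map (I := I) b.symm.toLinearMap hb
  simpa using this

lemma comp_zero_of_exact {A B C : Type*} [AddCommGroup A] [Module S A] [AddCommGroup B]
    [Module S B] [AddCommGroup C] [Module S C] {f : A →ₗ[S] B} {g : B →ₗ[S] C}
    (h : ker g = range f) (x : A) : g (f x) = 0 := by
  have : f x ∈ ker g := h ▸ mem_range_self f x
  exact this

lemma exact_rT (hEexact : ∀ i, ker (dE i) = range (dE (i + 1))) (i : ℕ)
    (B : Type*) [AddCommGroup B] [Module S B] [Module.Free S B] :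
    ker ((dE i).rTensor B) = range ((dE (i + 1)).rTensor B) := by
  have h : Function.Exact (dE (i + 1)) (dE i) := LinearMap.exact_iff.mpr (hEexact i)
  exact LinearMap.exact_iff.mp (Module.Flat.rTensor_exact B h)

lemma rT_comp_zero (hEexact : ∀ i, ker (dE i) = range (dE (i + 1))) (i : ℕ)
    {B : Type*} [AddCommGroup B] [Module S B] (w : E (i + 2) ⊗[S] B) :
    (dE i).rTensor B ((dE (i + 1)).rTensor B w) = 0 := by
  rw [rTensor_comp_apply']
  have : (dE i) ∘ₗ (dE (i + 1)) = 0 :=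
    LinearMap.ext fun x => comp_zero_of_exact (hEexact i) x
  rw [this, rTensor_zero, LinearMap.zero_apply]

/-- `dE c` tensored with a module killed by `I` is zero. -/
lemma rT_dEc_zero [Module.Free S (E 1)] [Module.Finite S (E 1)]
    (a : E (c + 1) ≃ₗ[S] Module.Dual S (E 0)) (b : E c ≃ₗ[S] Module.Dual S (E 1))
    (hdual : ∀ z : E (c + 1), b (dE c z) = (dE 0).dualMap (a z))
    (haug : range (e₀.toLinearMap ∘ₗ dE 0) = I)
    {M : Type*} [AddCommGroup M] [Module S M] (hkill : ∀ x ∈ I, ∀ m : M, x • m = 0)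
    (w : E (c + 1) ⊗[S] M) : (dE c).rTensor M w = 0 := by
  induction w using TensorProduct.induction_on with
  | zero => simp
  | tmul z m =>
      rw [rTensor_tmul]
      exact smulTop_tmul_zero hkill (dEc_small dE e₀ a b hdual haug z) m
  | add a b ha hb => rw [map_add, ha, hb, add_zero]

end ESec

section KSec

variable {S : Type*} [CommRing S] {I : Ideal S}
variable {c : ℕ} {E : ℕ → Type*} [∀ i, AddCommGroup (E i)] [∀ i, Module S (E i)]
variable {M : Type*} [AddCommGroup M] [Module S M]
variable {K : ℕ → Type*} [∀ i, AddCommGroup (K i)] [∀ i, Module S (K i)]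

/-- evaluation at the top spot of the staircase -/
noncomputable def topVal (u : E (c + 1) ≃ₗ[S] S) (εK : K 0 →ₗ[S] M) (i : ℕ) :
    (E i ⊗[S] K 0) →ₗ[S] M :=
  if h : i = c + 1 then
    εK ∘ₗ (oneT u (K 0)).toLinearMap ∘ₗ (castK (K := fun n => E n ⊗[S] K 0) h)
  else 0

lemma topVal_top (u : E (c + 1) ≃ₗ[S] S) (εK : K 0 →ₗ[S] M) (w : E (c + 1) ⊗[S] K 0) :
    topVal u εK (c + 1) w = εK (oneT u (K 0) w) := by
  rw [topVal, dif_pos rfl]; rfl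

/-- the staircase relation: `w` at position `(i, d)` chases up to the value `m ∈ M`. -/
def Chase (dE : ∀ i : ℕ, E (i + 1) →ₗ[S] E i) (u : E (c + 1) ≃ₗ[S] S)
    (dK : ∀ i : ℕ, K (i + 1) →ₗ[S] K i) (εK : K 0 →ₗ[S] M) :
    (d i : ℕ) → (E i ⊗[S] K d) → M → Prop
  | 0, i, w, m => topVal u εK i w = m
  | (d + 1), i, w, m => ∃ w' : E (i + 1) ⊗[S] K d,
      (dK d).lTensor (E i) w = (dE i).rTensor (K d) w' ∧ Chase dE u dK εK d (i + 1) w' m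

variable (dE : ∀ i : ℕ, E (i + 1) →ₗ[S] E i) (e₀ : E 0 ≃ₗ[S] S) (u : E (c + 1) ≃ₗ[S] S)
variable (dK : ∀ i : ℕ, K (i + 1) →ₗ[S] K i) (εK : K 0 →ₗ[S] M)

lemma chase_sub : ∀ (d i : ℕ) (w w' : E i ⊗[S] K d) (m m' : M),
    Chase dE u dK εK d i w m → Chase dE u dK εK d i w' m' →
    Chase dE u dK εK d i (w - w') (m - m') := by
  intro d
  induction d with
  | zero =>
      intro i w w' m m' h h'
      simp only [Chase] at *
      rw [map_sub, h, h']
  | succ d ih =>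
      rintro i w w' m m' ⟨a, ha, hc⟩ ⟨a', ha', hc'⟩
      exact ⟨a - a', by rw [map_sub, map_sub, ha, ha'], ih _ _ _ _ _ hc hc'⟩

lemma chase_smul (r : S) : ∀ (d i : ℕ) (w : E i ⊗[S] K d) (m : M),
    Chase dE u dK εK d i w m → Chase dE u dK εK d i (r • w) (r • m) := by
  intro d
  induction d with
  | zero =>
      intro i w m h
      simp only [Chase] at *
      rw [map_smul, h]
  | succ d ih =>
      rintro i w m ⟨a, ha, hc⟩
      exact ⟨r • a, by rw [map_smul, map_smul, ha], ih _ _ _ hc⟩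

lemma dd_zero (hKexact : ∀ i, ker (dK i) = range (dK (i + 1))) (d : ℕ) :
    (dK d) ∘ₗ (dK (d + 1)) = 0 :=
  LinearMap.ext fun x => comp_zero_of_exact (hKexact d) x

lemma lT_dd_zero (hKexact : ∀ i, ker (dK i) = range (dK (i + 1))) (d : ℕ)
    {A : Type*} [AddCommGroup A] [Module S A] (w : A ⊗[S] K (d + 1 + 1)) :
    (dK d).lTensor A ((dK (d + 1)).lTensor A w) = 0 := by
  rw [lTensor_comp_apply', dd_zero dK hKexact d, lTensor_zero, LinearMap.zero_apply]

lemma exact_lT (hKexact : ∀ i, ker (dK i) = range (dK (i + 1))) (d : ℕ)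
    (A : Type*) [AddCommGroup A] [Module S A] [Module.Free S A] :
    ker ((dK d).lTensor A) = range ((dK (d + 1)).lTensor A) := by
  have h : Function.Exact (dK (d + 1)) (dK d) := LinearMap.exact_iff.mpr (hKexact d)
  exact LinearMap.exact_iff.mp (Module.Flat.lTensor_exact A h)

lemma exact_lT_eps (hK0 : ker εK = range (dK 0))
    (A : Type*) [AddCommGroup A] [Module S A] [Module.Free S A] :
    ker (εK.lTensor A) = range ((dK 0).lTensor A) := by
  have h : Function.Exact (dK 0) εK := LinearMap.exact_iff.mpr hK0
  exact LinearMap.exact_iff.mp (Module.Flat.lTensor_exact A h)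

lemma chase_zero (hvanish : ∀ i, Subsingleton (E (c + 2 + i)))
    (hEexact : ∀ i, ker (dE i) = range (dE (i + 1)))
    (hKexact : ∀ i, ker (dK i) = range (dK (i + 1)))
    (hK0 : ker εK = range (dK 0))
    [∀ i, Module.Free S (K i)] :
    ∀ (d i : ℕ), i + d = c + 1 → ∀ (w : E i ⊗[S] K d) (m : M),
    Chase dE u dK εK d i w m →
    (∃ (aa : E i ⊗[S] K (d + 1)) (bb : E (i + 1) ⊗[S] K d),
        w = (dK d).lTensor (E i) aa + (dE i).rTensor (K d) bb) → m = 0 := by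
  intro d
  induction d with
  | zero =>
      intro i hid w m hch hdec
      obtain rfl : i = c + 1 := by omega
      obtain ⟨aa, bb, rfl⟩ := hdec
      have hdE : dE (c + 1) = 0 := by
        have : Subsingleton (E (c + 2)) := hvanish 0
        exact LinearMap.ext fun x => by rw [Subsingleton.elim x 0, map_zero, map_zero]
      simp only [Chase] at hch
      rw [topVal_top] at hch
      rw [hdE, rTensor_zero, LinearMap.zero_apply, add_zero] at hch
      rw [oneT_natural] at hch
      rw [← hch]
      exact comp_zero_of_exact hK0 _
  | succ d ih =>
      rintro i hid w m ⟨w₁, hrel, hch⟩ ⟨aa, bb, rfl⟩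
      -- h w₁ = v w = v (h bb) = h (v bb), so w₁ - v bb ∈ ker h = range h'
      have key : (dE i).rTensor (K d) (w₁ - (dK d).lTensor (E (i + 1)) bb) = 0 := by
        rw [map_sub, ← hrel, map_add, lT_dd_zero dK hKexact, zero_add, hv_comm, sub_self]
      have : w₁ - (dK d).lTensor (E (i + 1)) bb ∈ range ((dE (i + 1)).rTensor (K d)) := by
        rw [← exact_rT dE hEexact i (K d)]; exact key
      obtain ⟨cc, hcc⟩ := this
      refine ih (i + 1) (by omega) w₁ m hch ⟨bb, cc, ?_⟩
      rw [hcc]; abel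

lemma chase_inj (hEexact : ∀ i, ker (dE i) = range (dE (i + 1)))
    (hKexact : ∀ i, ker (dK i) = range (dK (i + 1)))
    (hK0 : ker εK = range (dK 0))
    [∀ i, Module.Free S (E i)] :
    ∀ (d i : ℕ), i + d = c + 1 → ∀ (w : E i ⊗[S] K d),
    Chase dE u dK εK d i w 0 →
    ∃ (aa : E i ⊗[S] K (d + 1)) (bb : E (i + 1) ⊗[S] K d),
        w = (dK d).lTensor (E i) aa + (dE i).rTensor (K d) bb := by
  intro d
  induction d with
  | zero =>
      intro i hid w hch
      obtain rfl : i = c + 1 := by omega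
      simp only [Chase] at hch
      rw [topVal_top] at hch
      have : oneT u (K 0) w ∈ range (dK 0) := by rw [← hK0]; exact hch
      obtain ⟨y, hy⟩ := this
      refine ⟨(oneT u (K 1)).symm y, 0, ?_⟩
      rw [map_zero, add_zero]
      apply (oneT u (K 0)).injective
      rw [oneT_natural, LinearEquiv.apply_symm_apply, hy]
  | succ d ih =>
      rintro i hid w ⟨w₁, hrel, hch⟩
      obtain ⟨aa, bb, rfl⟩ := ih (i + 1) (by omega) w₁ hch
      -- v w = h w₁ = h (v aa) + 0 = v (h aa), so w - h aa ∈ ker v = range v'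
      have key : (dK d).lTensor (E i) (w - (dE i).rTensor (K (d + 1)) aa) = 0 := by
        rw [map_sub, hrel, map_add, hv_comm]
        have : (dE i).rTensor (K d) ((dE (i + 1)).rTensor (K d) bb) = 0 :=
          rT_comp_zero dE hEexact i bb
        rw [this, add_zero, sub_self]
      have : w - (dE i).rTensor (K (d + 1)) aa ∈ range ((dK (d + 1)).lTensor (E i)) := by
        rw [← exact_lT dK hKexact d (E i)]; exact key
      obtain ⟨cc, hcc⟩ := this
      exact ⟨cc, aa, by rw [hcc]; abel⟩

lemma chase_exists0 (i : ℕ) (w : E i ⊗[S] K 0) :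
    ∃ m, Chase dE u dK εK 0 i w m := ⟨topVal u εK i w, rfl⟩

lemma chase_exists (hEexact : ∀ i, ker (dE i) = range (dE (i + 1)))
    (hKexact : ∀ i, ker (dK i) = range (dK (i + 1)))
    [∀ i, Module.Free S (K i)] :
    ∀ (d i : ℕ), ∀ (w : E i ⊗[S] K (d + 1)),
    ((dK d).lTensor (E i) w ∈ range ((dE i).rTensor (K d))) →
    ∃ m, Chase dE u dK εK (d + 1) i w m := by
  intro d
  induction d with
  | zero =>
      rintro i w ⟨w', hw'⟩
      exact ⟨topVal u εK (i + 1) w', w', hw'.symm, rfl⟩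
  | succ d ih =>
      rintro i w ⟨w', hw'⟩
      have key : (dE i).rTensor (K d) ((dK d).lTensor (E (i + 1)) w') = 0 := by
        rw [hv_comm, hw']; exact lT_dd_zero dK hKexact d w
      have : (dK d).lTensor (E (i + 1)) w' ∈ range ((dE (i + 1)).rTensor (K d)) := by
        rw [← exact_rT dE hEexact i (K d)]; exact key
      obtain ⟨m, hm⟩ := ih (i + 1) w' this
      exact ⟨m, w', hw'.symm, hm⟩

end KSec

section FullSec

variable {S : Type*} [CommRing S] {I : Ideal S}
variable {c : ℕ} {E : ℕ → Type*} [∀ i, AddCommGroup (E i)] [∀ i, Module S (E i)]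
variable {M : Type*} [AddCommGroup M] [Module S M]
variable {K : ℕ → Type*} [∀ i, AddCommGroup (K i)] [∀ i, Module S (K i)]
variable (dE : ∀ i : ℕ, E (i + 1) →ₗ[S] E i) (e₀ : E 0 ≃ₗ[S] S) (u : E (c + 1) ≃ₗ[S] S)
variable (dK : ∀ i : ℕ, K (i + 1) →ₗ[S] K i) (εK : K 0 →ₗ[S] M)

/-- a full chase from a cycle `z` of level `c+1` up to a value `m ∈ M`. -/
def FullChase (z : K (c + 1)) (m : M) : Prop :=
  ∃ s : E 1 ⊗[S] K c, oneT e₀ (K c) ((dE 0).rTensor (K c) s) = dK c z ∧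
    Chase dE u dK εK c 1 s m

lemma full_sub {z z' : K (c + 1)} {m m' : M} (h : FullChase dE e₀ u dK εK z m)
    (h' : FullChase dE e₀ u dK εK z' m') : FullChase dE e₀ u dK εK (z - z') (m - m') := by
  obtain ⟨s, hs, hc1⟩ := h
  obtain ⟨s', hs', hc2⟩ := h'
  exact ⟨s - s', by rw [map_sub, map_sub, hs, hs', map_sub], chase_sub dE u dK εK _ _ _ _ _ _ hc1 hc2⟩

lemma full_smul (r : S) {z : K (c + 1)} {m : M} (h : FullChase dE e₀ u dK εK z m) :
    FullChase dE e₀ u dK εK (r • z) (r • m) := by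
  obtain ⟨s, hs, hc1⟩ := h
  exact ⟨r • s, by rw [map_smul, map_smul, hs, map_smul], chase_smul dE u dK εK r _ _ _ _ hc1⟩

lemma full_exists (haug : range (e₀.toLinearMap ∘ₗ dE 0) = I)
    (hEexact : ∀ i, ker (dE i) = range (dE (i + 1)))
    (hKexact : ∀ i, ker (dK i) = range (dK (i + 1)))
    [∀ i, Module.Free S (K i)]
    {z : K (c + 1)} (hz : dK c z ∈ I • (⊤ : Submodule S (K c))) :
    ∃ m, FullChase dE e₀ u dK εK z m := by
  obtain ⟨g, hg⟩ := ismul_exists dE e₀ haug hz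
  cases c with
  | zero => exact ⟨topVal u εK 1 g, g, hg, rfl⟩
  | succ c' =>
      have h1 : oneT e₀ (K c') ((dE 0).rTensor (K c') ((dK c').lTensor (E 1) g)) = 0 := by
        rw [hv_comm, oneT_natural, hg]
        exact comp_zero_of_exact (hKexact c') z
      have h2 : (dE 0).rTensor (K c') ((dK c').lTensor (E 1) g) = 0 :=
        ((oneT e₀ (K c')).map_eq_zero_iff).mp h1
      have h3 : (dK c').lTensor (E 1) g ∈ range ((dE 1).rTensor (K c')) := by
        rw [← exact_rT dE hEexact 0 (K c')]; exact h2
      obtain ⟨m, hm⟩ := chase_exists dE u dK εK hEexact hKexact c' 1 g h3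
      exact ⟨m, g, hg, hm⟩

lemma full_zero (haug : range (e₀.toLinearMap ∘ₗ dE 0) = I)
    (hvanish : ∀ i, Subsingleton (E (c + 2 + i)))
    (hEexact : ∀ i, ker (dE i) = range (dE (i + 1)))
    (hKexact : ∀ i, ker (dK i) = range (dK (i + 1)))
    (hK0 : ker εK = range (dK 0))
    [∀ i, Module.Free S (K i)]
    {z : K (c + 1)} {m : M}
    (hdec : ∃ p ∈ I • (⊤ : Submodule S (K (c + 1))), ∃ y, z = p + dK (c + 1) y)
    (h : FullChase dE e₀ u dK εK z m) : m = 0 := by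
  obtain ⟨p, hp, y, rfl⟩ := hdec
  obtain ⟨s, hs, hch⟩ := h
  obtain ⟨g', hg'⟩ := ismul_exists dE e₀ haug hp
  have hdkz : dK c (p + dK (c + 1) y) = dK c p := by
    rw [map_add, comp_zero_of_exact (hKexact c) y, add_zero]
  have h2 : dK c p = oneT e₀ (K c) ((dE 0).rTensor (K c) ((dK c).lTensor (E 1) g')) := by
    rw [hv_comm, oneT_natural, hg']
  have h3 : (dE 0).rTensor (K c) (s - (dK c).lTensor (E 1) g') = 0 := by
    apply ((oneT e₀ (K c)).map_eq_zero_iff).mp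
    rw [map_sub, map_sub, hs, hdkz, h2, sub_self]
  have h4 : s - (dK c).lTensor (E 1) g' ∈ range ((dE 1).rTensor (K c)) := by
    rw [← exact_rT dE hEexact 0 (K c)]; exact h3
  obtain ⟨bb, hbb⟩ := h4
  refine chase_zero dE u dK εK hvanish hEexact hKexact hK0 c 1 (by omega) s m hch
    ⟨g', bb, ?_⟩
  rw [hbb]; abel

lemma full_inj (haug : range (e₀.toLinearMap ∘ₗ dE 0) = I)
    (hEexact : ∀ i, ker (dE i) = range (dE (i + 1)))
    (hKexact : ∀ i, ker (dK i) = range (dK (i + 1)))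
    (hK0 : ker εK = range (dK 0))
    [∀ i, Module.Free S (E i)]
    {z : K (c + 1)} (h : FullChase dE e₀ u dK εK z 0) :
    ∃ p ∈ I • (⊤ : Submodule S (K (c + 1))), ∃ y, z = p + dK (c + 1) y := by
  obtain ⟨s, hs, hch⟩ := h
  obtain ⟨aa, bb, rfl⟩ := chase_inj dE u dK εK hEexact hKexact hK0 c 1 (by omega) s hch
  set p := oneT e₀ (K (c + 1)) ((dE 0).rTensor (K (c + 1)) aa) with hpdef
  have h1 : dK c z = dK c p := by
    rw [← hs, map_add, rT_comp_zero dE hEexact 0 bb, add_zero, hv_comm, oneT_natural, hpdef]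
  have h2 : z - p ∈ range (dK (c + 1)) := by
    rw [← hKexact c]
    simp only [mem_ker, map_sub, h1, sub_self]
  obtain ⟨y, hy⟩ := h2
  exact ⟨p, ismul_mem dE e₀ haug aa, y, by rw [hy]; abel⟩

lemma eps_mu_zero (hkill : ∀ x ∈ I, ∀ m : M, x • m = 0)
    (haug : range (e₀.toLinearMap ∘ₗ dE 0) = I) (w : E 1 ⊗[S] K 0) :
    εK (oneT e₀ (K 0) ((dE 0).rTensor (K 0) w)) = 0 := by
  induction w using TensorProduct.induction_on with
  | zero => simp
  | tmul v x =>
      rw [rTensor_tmul, oneT_tmul, map_smul]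
      refine hkill _ ?_ _
      rw [← haug]; exact ⟨v, rfl⟩
  | add a b ha hb => rw [map_add, map_add, map_add, ha, hb, add_zero]

lemma bottom_exists (hkill : ∀ x ∈ I, ∀ m : M, x • m = 0)
    (haug : range (e₀.toLinearMap ∘ₗ dE 0) = I)
    (hEexact : ∀ i, ker (dE i) = range (dE (i + 1)))
    (hKexact : ∀ i, ker (dK i) = range (dK (i + 1)))
    (hK0 : ker εK = range (dK 0))
    (w : E 1 ⊗[S] K c) (m : M) (hch : Chase dE u dK εK c 1 w m) :
    ∃ z : K (c + 1), FullChase dE e₀ u dK εK z m := by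
  cases c with
  | zero =>
      have hmem : oneT e₀ (K 0) ((dE 0).rTensor (K 0) w) ∈ range (dK 0) := by
        rw [← hK0]; exact eps_mu_zero dE e₀ εK hkill haug w
      obtain ⟨z, hz⟩ := hmem
      exact ⟨z, w, hz.symm, hch⟩
  | succ c' =>
      rcases hch with ⟨w₂, hrel, hch₂⟩
      have h1 : dK c' (oneT e₀ (K (c' + 1)) ((dE 0).rTensor (K (c' + 1)) w)) = 0 := by
        rw [← oneT_natural, ← hv_comm, hrel, rT_comp_zero dE hEexact 0 w₂, map_zero]
      have h2 : oneT e₀ (K (c' + 1)) ((dE 0).rTensor (K (c' + 1)) w) ∈ range (dK (c' + 1)) := by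
        rw [← hKexact c']; exact h1
      obtain ⟨z, hz⟩ := h2
      exact ⟨z, w, hz.symm, w₂, hrel, hch₂⟩

lemma descend_aux [∀ i, Module.Free S (E i)] [∀ i, Module.Free S (K i)]
    [Module.Free S (E 1)] [Module.Finite S (E 1)]
    (a : E (c + 1) ≃ₗ[S] Module.Dual S (E 0)) (b : E c ≃ₗ[S] Module.Dual S (E 1))
    (hdual : ∀ z : E (c + 1), b (dE c z) = (dE 0).dualMap (a z))
    (hkill : ∀ x ∈ I, ∀ m : M, x • m = 0)
    (haug : range (e₀.toLinearMap ∘ₗ dE 0) = I)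
    (hEexact : ∀ i, ker (dE i) = range (dE (i + 1)))
    (hKexact : ∀ i, ker (dK i) = range (dK (i + 1)))
    (hK0 : ker εK = range (dK 0)) :
    ∀ (i d : ℕ), (i + 1) + d = c + 1 → ∀ (w : E (i + 1) ⊗[S] K d) (m : M),
    Chase dE u dK εK d (i + 1) w m → ∃ z : K (c + 1), FullChase dE e₀ u dK εK z m := by
  intro i
  induction i with
  | zero =>
      intro d hd w m hch
      obtain rfl : d = c := by omega
      exact bottom_exists dE e₀ u dK εK hkill haug hEexact hKexact hK0 w m hch
  | succ i ih =>
      intro d hd w m hch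
      have hcond : (dE (i + 1)).rTensor (K d) w ∈ range ((dK d).lTensor (E (i + 1))) := by
        cases d with
        | zero =>
            obtain rfl : c = i + 1 := by omega
            rw [← exact_lT_eps dK εK hK0 (E (i + 1))]
            show εK.lTensor (E (i + 1)) ((dE (i + 1)).rTensor (K 0) w) = 0
            rw [← hv_comm]
            exact rT_dEc_zero dE e₀ a b hdual haug hkill _
        | succ d' =>
            rcases hch with ⟨w₃, hrel3, -⟩
            rw [← exact_lT dK hKexact d' (E (i + 1))]
            show (dK d').lTensor (E (i + 1)) ((dE (i + 1)).rTensor (K (d' + 1)) w) = 0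
            rw [← hv_comm, hrel3, rT_comp_zero dE hEexact (i + 1) w₃]
      obtain ⟨w', hw'⟩ := hcond
      exact ih (d + 1) (by omega) w' m ⟨w, hw', hch⟩

lemma descend_total [∀ i, Module.Free S (E i)] [∀ i, Module.Free S (K i)]
    [Module.Finite S (E 1)]
    (a : E (c + 1) ≃ₗ[S] Module.Dual S (E 0)) (b : E c ≃ₗ[S] Module.Dual S (E 1))
    (hdual : ∀ z : E (c + 1), b (dE c z) = (dE 0).dualMap (a z))
    (hkill : ∀ x ∈ I, ∀ m : M, x • m = 0)
    (haug : range (e₀.toLinearMap ∘ₗ dE 0) = I)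
    (hEexact : ∀ i, ker (dE i) = range (dE (i + 1)))
    (hKexact : ∀ i, ker (dK i) = range (dK (i + 1)))
    (hK0 : ker εK = range (dK 0)) (x : K 0) :
    ∃ z : K (c + 1), FullChase dE e₀ u dK εK z (εK x) := by
  have h0 : Chase dE u dK εK 0 (c + 1) ((oneT u (K 0)).symm x) (εK x) := by
    show topVal u εK (c + 1) _ = εK x
    rw [topVal_top, LinearEquiv.apply_symm_apply]
  exact descend_aux dE e₀ u dK εK a b hdual hkill haug hEexact hKexact hK0 c 0
    (by omega) _ _ h0

end FullSec

section TransferSec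

variable {S : Type*} [CommRing S] {I : Ideal S}
variable {c : ℕ} {E : ℕ → Type*} [∀ i, AddCommGroup (E i)] [∀ i, Module S (E i)]
variable {M : Type*} [AddCommGroup M] [Module S M]
variable {K : ℕ → Type*} [∀ i, AddCommGroup (K i)] [∀ i, Module S (K i)]
variable (dE : ∀ i : ℕ, E (i + 1) →ₗ[S] E i) (e₀ : E 0 ≃ₗ[S] S) (u : E (c + 1) ≃ₗ[S] S)
variable (dK : ∀ i : ℕ, K (i + 1) →ₗ[S] K i) (εK : K 0 →ₗ[S] M)

/-- the contraction `E d → K d`, `q ↦ σ d 0 (q ⊗ x)` -/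
noncomputable def kap (σ : ∀ i j : ℕ, (E i ⊗[S] K j) →ₗ[S] K (i + j)) (x : K 0) (d : ℕ) :
    E d →ₗ[S] K d :=
  (σ d 0) ∘ₗ ((TensorProduct.mk S (E d) (K 0)).flip x)

lemma kap_apply (σ : ∀ i j : ℕ, (E i ⊗[S] K j) →ₗ[S] K (i + j)) (x : K 0) (d : ℕ) (q : E d) :
    kap σ x d q = σ d 0 (q ⊗ₜ x) := rfl

lemma kap_chain (σ : ∀ i j : ℕ, (E i ⊗[S] K j) →ₗ[S] K (i + j)) (x : K 0)
    (hσchain0 : ∀ i, (dK i) ∘ₗ (σ (i + 1) 0)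
      = (σ i 0) ∘ₗ (TensorProduct.map (dE i) LinearMap.id)) (d : ℕ) :
    (dK d) ∘ₗ kap σ x (d + 1) = (kap σ x d) ∘ₗ (dE d) := by
  refine LinearMap.ext fun q => ?_
  have := LinearMap.congr_fun (hσchain0 d) (q ⊗ₜ x)
  simpa [kap_apply, TensorProduct.map_tmul] using this

lemma transfer (hkill : ∀ x ∈ I, ∀ m : M, x • m = 0)
    (σ : ∀ i j : ℕ, (E i ⊗[S] K j) →ₗ[S] K (i + j))
    (hσaug : ∀ (y : E 0) (xx : K 0), εK (σ 0 0 (y ⊗ₜ xx)) = (e₀ y) • (εK xx))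
    (hσchain0 : ∀ i, (dK i) ∘ₗ (σ (i + 1) 0)
      = (σ i 0) ∘ₗ (TensorProduct.map (dE i) LinearMap.id))
    (x : K 0) (θ : S) :
    ∀ (d i : ℕ) (g : E i ⊗[S] E d) (vb : S ⧸ I),
      Chase dE u dE (I.mkQ ∘ₗ e₀.toLinearMap) d i g vb →
      (Submodule.Quotient.mk θ : S ⧸ I) = vb →
      Chase dE u dK εK d i ((kap σ x d).lTensor (E i) g) (θ • εK x) := by
  intro d
  induction d with
  | zero =>
      intro i g vb hch hθ
      have hg : topVal u (I.mkQ ∘ₗ e₀.toLinearMap) i g = vb := hch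
      show topVal u εK i ((kap σ x 0).lTensor (E i) g) = θ • εK x
      by_cases h : i = c + 1
      · subst h
        rw [topVal_top] at hg
        rw [topVal_top, oneT_natural]
        rw [kap_apply, hσaug]
        -- goal : e₀ (oneT u (E 0) g) • εK x = θ • εK x
        have hmem : θ - e₀ (oneT u (E 0) g) ∈ I := by
          have h2 : (Submodule.Quotient.mk θ : S ⧸ I)
              = Submodule.Quotient.mk (e₀ (oneT u (E 0) g)) := hθ.trans hg.symm
          exact (Submodule.Quotient.eq I).mp h2
        have h3 := hkill _ hmem (εK x)
        rw [sub_smul] at h3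
        exact (sub_eq_zero.mp h3).symm
      · rw [topVal, dif_neg h] at hg ⊢
        have hθI : θ ∈ I := by
          have : (Submodule.Quotient.mk θ : S ⧸ I) = 0 := by
            rw [hθ, ← hg]; rfl
          exact (Submodule.Quotient.mk_eq_zero I).mp this
        show (0 : (E i ⊗[S] K 0) →ₗ[S] M) _ = θ • εK x
        rw [LinearMap.zero_apply, hkill θ hθI (εK x)]
  | succ d ih =>
      rintro i g vb ⟨g', hrel, hch⟩ hθ
      refine ⟨(kap σ x d).lTensor (E (i + 1)) g', ?_, ih (i + 1) g' vb hch hθ⟩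
      rw [lTensor_comp_apply', kap_chain dE dK σ x hσchain0 d, ← lTensor_comp_apply',
        hrel, hv_comm]

lemma full_transfer (hkill : ∀ x ∈ I, ∀ m : M, x • m = 0)
    (σ : ∀ i j : ℕ, (E i ⊗[S] K j) →ₗ[S] K (i + j))
    (hσaug : ∀ (y : E 0) (xx : K 0), εK (σ 0 0 (y ⊗ₜ xx)) = (e₀ y) • (εK xx))
    (hσchain0 : ∀ i, (dK i) ∘ₗ (σ (i + 1) 0)
      = (σ i 0) ∘ₗ (TensorProduct.map (dE i) LinearMap.id))
    (x : K 0) (θ : S) (vb : S ⧸ I) (hθ : (Submodule.Quotient.mk θ : S ⧸ I) = vb)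
    (h : FullChase dE e₀ u dE (I.mkQ ∘ₗ e₀.toLinearMap) (u.symm 1) vb) :
    FullChase dE e₀ u dK εK (σ (c + 1) 0 ((u.symm 1) ⊗ₜ x)) (θ • εK x) := by
  obtain ⟨sE, hsE, hch⟩ := h
  refine ⟨(kap σ x c).lTensor (E 1) sE, ?_,
    transfer dE e₀ u dK εK hkill σ hσaug hσchain0 x θ c 1 sE vb hch hθ⟩
  rw [hv_comm, oneT_natural, hsE]
  have := LinearMap.congr_fun (hσchain0 c) ((u.symm 1) ⊗ₜ x)
  simp only [LinearMap.comp_apply, TensorProduct.map_tmul, LinearMap.id_coe, id_eq] at this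
  exact this.symm

end TransferSec

open TensorProduct in
theorem sigma_top_induces_iso_H0_to_Hc
    (S : Type*) [CommRing S] [IsNoetherianRing S] (I : Ideal S) (c : ℕ)
    -- the resolution `E` of `R = S/I`, of length `c+1`, with `∂_{c+1} ≅ ∂₁^*`
    (E : ℕ → Type*) [∀ i, AddCommGroup (E i)] [∀ i, Module S (E i)]
    [∀ i, Module.Free S (E i)] [∀ i, Module.Finite S (E i)]
    (dE : ∀ i : ℕ, E (i + 1) →ₗ[S] E i)
    (hvanish : ∀ i, Subsingleton (E (c + 2 + i)))
    (e₀ : E 0 ≃ₗ[S] S)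
    (haug : LinearMap.range (e₀.toLinearMap ∘ₗ dE 0) = I)
    (hEexact : ∀ i, LinearMap.ker (dE i) = LinearMap.range (dE (i + 1)))
    (a : E (c + 1) ≃ₗ[S] Module.Dual S (E 0))
    (b : E c ≃ₗ[S] Module.Dual S (E 1))
    (hdual : ∀ z : E (c + 1), b (dE c z) = (dE 0).dualMap (a z))
    (u : E (c + 1) ≃ₗ[S] S)
    -- the `R`-module `M` and its `S`-free resolution `K`
    (M : Type*) [AddCommGroup M] [Module S M]
    (hkill : ∀ x ∈ I, ∀ m : M, x • m = 0)
    (K : ℕ → Type*) [∀ i, AddCommGroup (K i)] [∀ i, Module S (K i)]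
    [∀ i, Module.Free S (K i)] [∀ i, Module.Finite S (K i)]
    (dK : ∀ i : ℕ, K (i + 1) →ₗ[S] K i)
    (εK : K 0 →ₗ[S] M) (hεK : Function.Surjective εK)
    (hK0 : LinearMap.ker εK = LinearMap.range (dK 0))
    (hKexact : ∀ i, LinearMap.ker (dK i) = LinearMap.range (dK (i + 1)))
    -- `σ : E ⊗ K → K`, a map of complexes inducing the multiplication `R ⊗ M → M`
    (σ : ∀ i j : ℕ, (E i ⊗[S] K j) →ₗ[S] K (i + j))
    (hσaug : ∀ (y : E 0) (x : K 0), εK (σ 0 0 (y ⊗ₜ x)) = (e₀ y) • (εK x))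
    (hσchain : ∀ i j,
      (dK ((i + 1) + j)) ∘ₗ (σ (i + 1) (j + 1))
        = (castK (by omega) : K (i + (j + 1)) →ₗ[S] K ((i + 1) + j)) ∘ₗ
            ((σ i (j + 1)) ∘ₗ (TensorProduct.map (dE i) LinearMap.id))
          + ((-1 : ℤ) ^ (i + 1)) •
            ((σ (i + 1) j) ∘ₗ (TensorProduct.map LinearMap.id (dK j))))
    (hσchain0 : ∀ i,
      (dK i) ∘ₗ (σ (i + 1) 0) = (σ i 0) ∘ₗ (TensorProduct.map (dE i) LinearMap.id))
    (hσchain0' : ∀ j,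
      (dK (0 + j)) ∘ₗ (σ 0 (j + 1)) = (σ 0 j) ∘ₗ (TensorProduct.map LinearMap.id (dK j)))
    -- the maps `σ_{c+1, j}`, via the identification `u : E_{c+1} ≅ S`
    (sig : ∀ j : ℕ, K j →ₗ[S] K (c + 1 + j))
    (hsig : ∀ (j : ℕ) (x : K j), sig j x = σ (c + 1) j ((u.symm 1) ⊗ₜ x)) :
    -- `R ⊗ σ_{c+1,•}` is a morphism of complexes `R ⊗ K → (R ⊗ K)[−(c+1)]` ...
    (∀ j : ℕ,
      (quotMap I (dK (c + 1 + j))) ∘ₗ (quotMap I (sig (j + 1)))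
        = ((-1 : ℤ) ^ (c + 1)) • ((quotMap I (sig j)) ∘ₗ (quotMap I (dK j)))) ∧
    -- ... inducing an isomorphism `M = H₀(R ⊗ K) ≅ H_{c+1}(R ⊗ K) = Tor^S_{c+1}(R,M)`:
    ((quotMap I (dK c)) ∘ₗ (quotMap I (sig 0)) = 0) ∧
    (∀ x, (quotMap I (sig 0)) ((quotMap I (dK 0)) x)
      ∈ LinearMap.range (quotMap I (dK (c + 1)))) ∧
    (∀ z, (quotMap I (dK c)) z = 0 →
      ∃ x, z - (quotMap I (sig 0)) x ∈ LinearMap.range (quotMap I (dK (c + 1)))) ∧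
    (∀ x, (quotMap I (sig 0)) x ∈ LinearMap.range (quotMap I (dK (c + 1))) →
      x ∈ LinearMap.range (quotMap I (dK 0))) := by
  classical
  -- the `E`-instance of the chase machinery, with `M := S ⧸ I`
  have hkillE : ∀ x ∈ I, ∀ m : S ⧸ I, x • m = 0 := by
    intro x hx m
    obtain ⟨s, rfl⟩ := Submodule.Quotient.mk_surjective _ m
    rw [← Submodule.Quotient.mk_smul, Submodule.Quotient.mk_eq_zero]
    rw [smul_eq_mul]
    exact I.mul_mem_right s hx
  set εE : E 0 →ₗ[S] (S ⧸ I) := I.mkQ ∘ₗ e₀.toLinearMap with hεE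
  have hE0 : LinearMap.ker εE = LinearMap.range (dE 0) := by
    ext x
    constructor
    · intro hx
      have h1 : e₀ x ∈ I := by
        have h2 : I.mkQ (e₀ x) = 0 := hx
        rwa [Submodule.mkQ_apply, Submodule.Quotient.mk_eq_zero] at h2
      rw [← haug] at h1
      obtain ⟨v, hv⟩ := h1
      exact ⟨v, e₀.injective hv⟩
    · rintro ⟨v, rfl⟩
      show I.mkQ (e₀ (dE 0 v)) = 0
      rw [Submodule.mkQ_apply, Submodule.Quotient.mk_eq_zero, ← haug]
      exact ⟨v, rfl⟩
  have hPsmall : dE c (u.symm 1) ∈ I • (⊤ : Submodule S (E c)) :=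
    dEc_small dE e₀ a b hdual haug _
  obtain ⟨vb, hvb⟩ : ∃ vb, FullChase dE e₀ u dE εE (u.symm 1) vb :=
    full_exists dE e₀ u dE εE haug hEexact hEexact hPsmall
  obtain ⟨θ, hθ⟩ := Submodule.Quotient.mk_surjective _ vb
  obtain ⟨z₁, hz₁⟩ :=
    descend_total dE e₀ u dE εE a b hdual hkillE haug hEexact hEexact hE0 (e₀.symm 1)
  have hval1 : εE (e₀.symm 1) = Submodule.Quotient.mk 1 := by
    show I.mkQ (e₀ (e₀.symm 1)) = _
    rw [LinearEquiv.apply_symm_apply]; rfl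
  have hz1rep : (u z₁) • (u.symm 1) = z₁ := by
    rw [← map_smul, smul_eq_mul, mul_one, LinearEquiv.symm_apply_apply]
  have hscaled : FullChase dE e₀ u dE εE z₁ ((u z₁) • vb) := by
    have h3 := full_smul dE e₀ u dE εE (u z₁) hvb
    rwa [hz1rep] at h3
  have hwd : εE (e₀.symm 1) - (u z₁) • vb = 0 := by
    refine full_zero dE e₀ u dE εE haug hvanish hEexact hEexact hE0 ?_
      (full_sub dE e₀ u dE εE hz₁ hscaled)
    exact ⟨0, Submodule.zero_mem _, 0, by rw [map_zero, add_zero, sub_self]⟩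
  have hunitmem : u z₁ * θ - 1 ∈ I := by
    have h5 : (Submodule.Quotient.mk (u z₁ * θ) : S ⧸ I) = Submodule.Quotient.mk 1 := by
      calc (Submodule.Quotient.mk (u z₁ * θ) : S ⧸ I)
          = (u z₁) • (Submodule.Quotient.mk θ : S ⧸ I) := by
            rw [← smul_eq_mul, Submodule.Quotient.mk_smul]
        _ = (u z₁) • vb := by rw [hθ]
        _ = εE (e₀.symm 1) := (sub_eq_zero.mp hwd).symm
        _ = Submodule.Quotient.mk 1 := hval1
    exact (Submodule.Quotient.eq I).mp h5
  have hunit : ∀ m : M, (u z₁) • θ • m = m := by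
    intro m
    have h6 := hkill _ hunitmem m
    rw [sub_smul, one_smul, sub_eq_zero] at h6
    rw [smul_smul]
    exact h6
  have hsigchase : ∀ x : K 0, FullChase dE e₀ u dK εK (sig 0 x) (θ • εK x) := by
    intro x
    rw [hsig 0 x]
    exact full_transfer dE e₀ u dK εK hkill σ hσaug hσchain0 x θ vb hθ hvb
  -- part 1
  have part1 : ∀ j : ℕ, (quotMap I (dK (c + 1 + j))) ∘ₗ (quotMap I (sig (j + 1)))
      = ((-1 : ℤ) ^ (c + 1)) • ((quotMap I (sig j)) ∘ₗ (quotMap I (dK j))) := by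
    intro j
    refine LinearMap.ext fun z => ?_
    obtain ⟨k, rfl⟩ := Submodule.Quotient.mk_surjective _ z
    have e1 : ((quotMap I (dK (c + 1 + j))) ∘ₗ (quotMap I (sig (j + 1))))
          (Submodule.Quotient.mk k)
        = Submodule.Quotient.mk (dK (c + 1 + j) (sig (j + 1) k)) := by
      rw [LinearMap.comp_apply, quotMap_mk]
      exact quotMap_mk _ _
    have e2 : (((-1 : ℤ) ^ (c + 1)) • ((quotMap I (sig j)) ∘ₗ (quotMap I (dK j))))
          (Submodule.Quotient.mk k)
        = ((-1 : ℤ) ^ (c + 1)) • (Submodule.Quotient.mk (sig j (dK j k))) := by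
      rw [LinearMap.smul_apply, LinearMap.comp_apply, quotMap_mk, quotMap_mk]
    rw [e1, e2]
    have hL : dK (c + 1 + j) (sig (j + 1) k)
        = (castK (S := S) (K := K) (by omega : c + (j + 1) = (c + 1) + j))
            ((σ c (j + 1)) ((dE c (u.symm 1)) ⊗ₜ k))
          + ((-1 : ℤ) ^ (c + 1)) • (sig j (dK j k)) := by
      rw [hsig (j + 1) k, hsig j]
      have hc := LinearMap.congr_fun (hσchain c j) ((u.symm 1) ⊗ₜ k)
      simp only [LinearMap.add_apply, LinearMap.coe_comp, Function.comp_apply,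
        LinearMap.smul_apply, TensorProduct.map_tmul, LinearMap.id_coe, id_eq] at hc
      exact hc
    rw [hL, Submodule.Quotient.mk_add]
    have hz0 : (Submodule.Quotient.mk ((castK (S := S) (K := K) (by omega : c + (j + 1) = (c + 1) + j))
          ((σ c (j + 1)) ((dE c (u.symm 1)) ⊗ₜ k)))
        : K (c + 1 + j) ⧸ (I • (⊤ : Submodule S (K (c + 1 + j))))) = 0 := by
      rw [Submodule.Quotient.mk_eq_zero]
      exact mem_smulTop_map _ (mem_smulTop_map _ (tmul_mem_smulTop hPsmall k))
    rw [hz0, zero_add]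
    exact map_zsmul (Submodule.mkQ (I • (⊤ : Submodule S (K (c + 1 + j)))))
      ((-1 : ℤ) ^ (c + 1)) (sig j (dK j k))
  -- part 2
  have part2 : (quotMap I (dK c)) ∘ₗ (quotMap I (sig 0)) = 0 := by
    refine LinearMap.ext fun z => ?_
    obtain ⟨x, rfl⟩ := Submodule.Quotient.mk_surjective _ z
    have e1 : ((quotMap I (dK c)) ∘ₗ (quotMap I (sig 0))) (Submodule.Quotient.mk x)
        = Submodule.Quotient.mk (dK c (sig 0 x)) := by
      rw [LinearMap.comp_apply, quotMap_mk]
      exact quotMap_mk _ _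
    rw [e1, LinearMap.zero_apply]
    have hL : dK c (sig 0 x) = σ c 0 ((dE c (u.symm 1)) ⊗ₜ x) := by
      rw [hsig 0 x]
      have hc := LinearMap.congr_fun (hσchain0 c) ((u.symm 1) ⊗ₜ x)
      simp only [LinearMap.coe_comp, Function.comp_apply, TensorProduct.map_tmul,
        LinearMap.id_coe, id_eq] at hc
      exact hc
    rw [hL, Submodule.Quotient.mk_eq_zero]
    exact mem_smulTop_map _ (tmul_mem_smulTop hPsmall x)
  refine ⟨part1, part2, ?_, ?_, ?_⟩
  -- part 3
  · intro x
    have h7 := LinearMap.congr_fun (part1 0) x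
    simp only [LinearMap.comp_apply, LinearMap.smul_apply] at h7
    have h8 : quotMap I (sig 0) ((quotMap I (dK 0)) x)
        = ((-1 : ℤ) ^ (c + 1)) • (quotMap I (dK (c + 1 + 0)) ((quotMap I (sig 1)) x)) := by
      rw [h7, smul_smul, ← pow_add, Even.neg_one_pow ⟨c + 1, by ring⟩, one_smul]
    rw [h8]
    refine ⟨((-1 : ℤ) ^ (c + 1)) • ((quotMap I (sig 1)) x), ?_⟩
    exact map_zsmul (quotMap I (dK (c + 1))) _ _
  -- part 4
  · intro z hz
    obtain ⟨z₀, rfl⟩ := Submodule.Quotient.mk_surjective _ z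
    rw [quotMap_mk, Submodule.Quotient.mk_eq_zero] at hz
    obtain ⟨m, hm⟩ := full_exists dE e₀ u dK εK haug hEexact hKexact hz
    obtain ⟨x₀, hx₀⟩ := hεK m
    set x : K 0 := (u z₁) • x₀ with hxdef
    have h11 : θ • εK x = m := by
      rw [hxdef, map_smul, hx₀, smul_comm]
      exact hunit m
    have hsx : FullChase dE e₀ u dK εK (sig 0 x) m := by
      have h9 := hsigchase x
      rwa [h11] at h9
    have h10 : FullChase dE e₀ u dK εK (z₀ - sig 0 x) 0 := by
      have h12 := full_sub dE e₀ u dK εK hm hsx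
      rwa [sub_self] at h12
    obtain ⟨p, hp, y, hzy⟩ := full_inj dE e₀ u dK εK haug hEexact hKexact hK0 h10
    refine ⟨Submodule.Quotient.mk x, ?_⟩
    have hq : (Submodule.Quotient.mk z₀ : K (c + 1) ⧸ (I • (⊤ : Submodule S (K (c + 1)))))
          - quotMap I (sig 0) (Submodule.Quotient.mk x)
        = Submodule.Quotient.mk (z₀ - sig 0 x) := by
      have h13 := quotMap_mk (I := I) (sig 0) x
      rw [h13]
      exact (Submodule.Quotient.mk_sub _).symm
    rw [hq]
    exact (mem_range_quotMap (dK (c + 1))).mpr ⟨p, hp, y, hzy⟩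
  -- part 5
  · intro x hx
    obtain ⟨x₀, rfl⟩ := Submodule.Quotient.mk_surjective _ x
    rw [quotMap_mk] at hx
    obtain ⟨p, hp, y, hpy⟩ := (mem_range_quotMap (dK (c + 1))).mp hx
    have h12 : θ • εK x₀ = 0 :=
      full_zero dE e₀ u dK εK haug hvanish hEexact hKexact hK0 ⟨p, hp, y, hpy⟩ (hsigchase x₀)
    have h13 : εK x₀ = 0 := by
      rw [← hunit (εK x₀), h12, smul_zero]
    have h14 : x₀ ∈ LinearMap.range (dK 0) := by rw [← hK0]; exact h13
    obtain ⟨y0, hy0⟩ := h14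
    exact ⟨Submodule.Quotient.mk y0, by rw [quotMap_mk, hy0]⟩
end

section
/- Let S be a local Gorenstein ring, g a non-zerodivisor, R = S/(g), and M an R-module with finite S-free resolution (K, δ). Let τ: K → K[1] be a homotopy for multiplication by g on K. Then the reductions modulo g of the even part K_even = ⊕ K_{2i} and the odd part K_odd = ⊕ K_{2i+1}, together with the maps induced by δ + τ, form a matrix factorization of g up to stabilization: (δ + τ)^2 = g·id on K, so the pair of maps (δ+τ: K_odd → K_even, δ+τ: K_even → K_odd) satisfies that both compositions equal multiplication by g. -/
open scoped DirectSum in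
theorem even_odd_folding_is_matrix_factorization
    (S : Type*) [CommRing S] (g : S) (hg : g ∈ nonZeroDivisors S)
    (M : Type*) [AddCommGroup M] [Module S M] (hM : ∀ m : M, g • m = 0)
    (K : ℕ → Type*) [∀ i, AddCommGroup (K i)] [∀ i, Module S (K i)]
    [∀ i, Module.Free S (K i)] [∀ i, Module.Finite S (K i)]
    (d : ∀ i : ℕ, K (i + 1) →ₗ[S] K i)
    (hd : ∀ i, (d i) ∘ₗ (d (i + 1)) = 0)
    -- `K` is a finite resolution of `M`
    (ε : K 0 →ₗ[S] M) (hεsurj : Function.Surjective ε)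
    (h0 : LinearMap.ker ε = LinearMap.range (d 0))
    (hexact : ∀ i, LinearMap.ker (d i) = LinearMap.range (d (i + 1)))
    (hfin : ∃ len : ℕ, ∀ i, Subsingleton (K (len + i)))
    -- the homotopy `τ` for multiplication by `g`, with `τ² = 0`
    (τ : ∀ i : ℕ, K i →ₗ[S] K (i + 1))
    (hτ : ∀ i, (d (i + 1)) ∘ₗ (τ (i + 1)) + (τ i) ∘ₗ (d i) = g • LinearMap.id)
    (hτ0 : (d 0) ∘ₗ (τ 0) = g • LinearMap.id)
    (hτsq : ∀ i, (τ (i + 1)) ∘ₗ (τ i) = 0)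
    -- the folded maps `d + τ`
    (A : (⨁ i : ℕ, K (2 * i + 1)) →ₗ[S] ⨁ i : ℕ, K (2 * i))
    (B : (⨁ i : ℕ, K (2 * i)) →ₗ[S] ⨁ i : ℕ, K (2 * i + 1))
    (hA : A = DirectSum.toModule S ℕ _ (fun i =>
      (DirectSum.lof S ℕ (fun t => K (2 * t)) (i + 1)) ∘ₗ
          (castK (by ring) : K (2 * i + 1 + 1) →ₗ[S] K (2 * (i + 1))) ∘ₗ (τ (2 * i + 1))
        + (DirectSum.lof S ℕ (fun t => K (2 * t)) i) ∘ₗ (d (2 * i))))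
    (hB : B = DirectSum.toModule S ℕ _
      ((fun i => match i with
        | 0 => (DirectSum.lof S ℕ (fun t => K (2 * t + 1)) 0) ∘ₗ (τ 0)
        | (i + 1) =>
          (DirectSum.lof S ℕ (fun t => K (2 * t + 1)) (i + 1)) ∘ₗ (τ (2 * (i + 1)))
            + (DirectSum.lof S ℕ (fun t => K (2 * t + 1)) i) ∘ₗ (d (2 * i + 1)) ∘ₗ
                (castK (by ring) : K (2 * (i + 1)) →ₗ[S] K (2 * i + 1 + 1))) :
        ∀ i : ℕ, K (2 * i) →ₗ[S] ⨁ t : ℕ, K (2 * t + 1))) :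
    A ∘ₗ B = g • LinearMap.id ∧ B ∘ₗ A = g • LinearMap.id := by
  subst hA hB
  have hτ' : ∀ i (x : K (i + 1)), d (i + 1) (τ (i + 1) x) + τ i (d i x) = g • x := by
    intro i x
    have := congrArg (fun f => f x) (hτ i)
    simpa using this
  have hτ0' : ∀ x : K 0, d 0 (τ 0 x) = g • x := by
    intro x
    have := congrArg (fun f => f x) hτ0
    simpa using this
  have hτsq' : ∀ i (x : K i), τ (i + 1) (τ i x) = 0 := by
    intro i x
    have := congrArg (fun f => f x) (hτsq i)
    simpa using this
  have hd' : ∀ i (x : K (i + 1 + 1)), d i (d (i + 1) x) = 0 := by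
    intro i x
    have := congrArg (fun f => f x) (hd i)
    simpa using this
  constructor
  · apply DirectSum.linearMap_ext
    intro i
    apply LinearMap.ext
    intro x
    simp only [LinearMap.comp_apply, DirectSum.toModule_lof, LinearMap.add_apply,
      LinearMap.smul_apply, LinearMap.id_apply]
    match i with
    | 0 =>
      simp only [LinearMap.comp_apply, map_add, DirectSum.toModule_lof, LinearMap.add_apply]
      have e1 : (castK (by ring) : K (2 * 0 + 1 + 1) →ₗ[S] K (2 * (0 + 1))) = LinearMap.id := rfl
      rw [e1]
      have h1 : τ (2 * 0 + 1) (τ 0 x) = 0 := hτsq' 0 x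
      rw [h1]
      rw [show (d (2 * 0)) ((τ 0) x) = g • x from hτ0' x]
      simp
    | (i + 1) =>
      simp only [LinearMap.comp_apply, map_add, DirectSum.toModule_lof, LinearMap.add_apply]
      rw [show (τ (2 * (i + 1) + 1)) ((τ (2 * (i + 1))) x) = 0 from hτsq' (2 * (i + 1)) x]
      rw [show (d (2 * i)) ((d (2 * i + 1))
          ((castK (show 2 * (i + 1) = 2 * i + 1 + 1 by ring) : K (2 * (i + 1)) →ₗ[S] K (2 * i + 1 + 1)) x)) = 0
        from hd' (2 * i) _]
      simp only [map_zero, zero_add, add_zero]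
      rw [← map_add]
      rw [show (d (2 * (i + 1))) ((τ (2 * (i + 1))) x) +
          (castK (show 2 * i + 1 + 1 = 2 * (i + 1) by ring) : K (2 * i + 1 + 1) →ₗ[S] K (2 * (i + 1)))
            ((τ (2 * i + 1)) ((d (2 * i + 1))
              ((castK (show 2 * (i + 1) = 2 * i + 1 + 1 by ring) : K (2 * (i + 1)) →ₗ[S] K (2 * i + 1 + 1)) x))) =
          g • x from hτ' (2 * i + 1) x]
      simp
  · apply DirectSum.linearMap_ext
    intro i
    apply LinearMap.ext
    intro x
    simp only [LinearMap.comp_apply, DirectSum.toModule_lof, LinearMap.add_apply,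
      LinearMap.smul_apply, LinearMap.id_apply]
    match i with
    | 0 =>
      simp only [LinearMap.comp_apply, map_add, DirectSum.toModule_lof, LinearMap.add_apply]
      rw [show (τ (2 * (0 + 1)))
          ((castK (show 2 * 0 + 1 + 1 = 2 * (0 + 1) by ring) : K (2 * 0 + 1 + 1) →ₗ[S] K (2 * (0 + 1)))
            ((τ (2 * 0 + 1)) x)) = 0 from hτsq' (2 * 0 + 1) x]
      simp only [map_zero, zero_add, add_zero]
      rw [← map_add]
      rw [show (d (2 * 0 + 1))
          ((castK (show 2 * (0 + 1) = 2 * 0 + 1 + 1 by ring) : K (2 * (0 + 1)) →ₗ[S] K (2 * 0 + 1 + 1))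
            ((castK (show 2 * 0 + 1 + 1 = 2 * (0 + 1) by ring) : K (2 * 0 + 1 + 1) →ₗ[S] K (2 * (0 + 1)))
              ((τ (2 * 0 + 1)) x))) + (τ 0) ((d (2 * 0)) x) = g • x from hτ' (2 * 0) x]
      simp
    | (j + 1) =>
      simp only [LinearMap.comp_apply, map_add, DirectSum.toModule_lof, LinearMap.add_apply]
      rw [show (τ (2 * (j + 1 + 1)))
          ((castK (show 2 * (j + 1) + 1 + 1 = 2 * (j + 1 + 1) by ring) :
              K (2 * (j + 1) + 1 + 1) →ₗ[S] K (2 * (j + 1 + 1)))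
            ((τ (2 * (j + 1) + 1)) x)) = 0 from hτsq' (2 * (j + 1) + 1) x]
      rw [show (d (2 * j + 1))
          ((castK (show 2 * (j + 1) = 2 * j + 1 + 1 by ring) : K (2 * (j + 1)) →ₗ[S] K (2 * j + 1 + 1))
            ((d (2 * (j + 1))) x)) = 0 from hd' (2 * j + 1) x]
      simp only [map_zero, zero_add, add_zero]
      rw [← map_add]
      rw [show (d (2 * (j + 1) + 1))
          ((castK (show 2 * (j + 1 + 1) = 2 * (j + 1) + 1 + 1 by ring) :
              K (2 * (j + 1 + 1)) →ₗ[S] K (2 * (j + 1) + 1 + 1))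
            ((castK (show 2 * (j + 1) + 1 + 1 = 2 * (j + 1 + 1) by ring) :
                K (2 * (j + 1) + 1 + 1) →ₗ[S] K (2 * (j + 1 + 1)))
              ((τ (2 * (j + 1) + 1)) x))) + (τ (2 * (j + 1))) ((d (2 * (j + 1))) x) = g • x
        from hτ' (2 * (j + 1)) x]
      simp
end
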